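/- Let (V, e) be an order unit space of dimension at least 2 and let u ∈ V⁺ be a peripheral element (‖u‖ = ‖e−u‖ = 1 and e − u ∈ V⁺). Then the subspace P_u = {αe + βu : α, β ∈ ℝ} is unitally order isomorphic to ℓ∞², via the map αe + βu ↦ (α, α+β); moreover this map is an isometry. -/

import Mathlib

open Set

/-- `C` is the positive cone of an order unit space structure on `V` with order unit `e`:
a proper, Archimedean cone for which `e` is an order unit. -/
structure IsOrderUnitSpace {V : Type*} [AddCommGroup V] [Module ℝ V]
    (C : Set V) (e : V) : Prop where
  zero_mem : (0 : V) ∈ C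
  add_mem : ∀ u ∈ C, ∀ v ∈ C, u + v ∈ C
  smul_mem : ∀ r : ℝ, 0 ≤ r → ∀ v ∈ C, r • v ∈ C
  proper : ∀ v ∈ C, -v ∈ C → v = 0
  arch : ∀ v : V, (∀ ε : ℝ, 0 < ε → ε • e + v ∈ C) → v ∈ C
  unit : ∀ v : V, ∃ a : ℝ, 0 < a ∧ a • e - v ∈ C ∧ a • e + v ∈ C

/-- The order unit norm `‖v‖ = inf {a > 0 : a • e ± v ∈ C}`. -/
noncomputable def ouNorm {V : Type*} [AddCommGroup V] [Module ℝ V]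
    (C : Set V) (e : V) (v : V) : ℝ :=
  sInf {a : ℝ | 0 < a ∧ a • e - v ∈ C ∧ a • e + v ∈ C}

/-- A state: a positive linear functional sending `e` to `1`. -/
def IsState {V : Type*} [AddCommGroup V] [Module ℝ V]
    (C : Set V) (e : V) (f : V →ₗ[ℝ] ℝ) : Prop :=
  (∀ v ∈ C, 0 ≤ f v) ∧ f e = 1

/-- `∞`-orthogonality with respect to the order unit norm. -/
def PerpInf {V : Type*} [AddCommGroup V] [Module ℝ V]
    (C : Set V) (e : V) (x y : V) : Prop :=
  ∀ k : ℝ, ouNorm C e (x + k • y) = max (ouNorm C e x) (ouNorm C e (k • y))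

/-- A peripheral element of an order unit space. -/
def Peripheral {V : Type*} [AddCommGroup V] [Module ℝ V]
    (C : Set V) (e : V) (u : V) : Prop :=
  u ∈ C ∧ e - u ∈ C ∧ ouNorm C e u = 1 ∧ ouNorm C e (e - u) = 1

section Aux
variable {V : Type*} [AddCommGroup V] [Module ℝ V] {C : Set V} {e : V}

lemma aux_e_mem (h : IsOrderUnitSpace C e) {u : V} (hu : Peripheral C e u) : e ∈ C := by
  have := h.add_mem u hu.1 (e - u) hu.2.1
  simpa using this

lemma aux_norm_zero (h : IsOrderUnitSpace C e) (he : e ∈ C) : ouNorm C e 0 = 0 := by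
  have hs : {a : ℝ | 0 < a ∧ a • e - 0 ∈ C ∧ a • e + 0 ∈ C} = Set.Ioi 0 := by
    ext a
    simp only [sub_zero, add_zero, Set.mem_setOf_eq, Set.mem_Ioi]
    exact ⟨fun h => h.1, fun ha => ⟨ha, h.smul_mem a ha.le e he, h.smul_mem a ha.le e he⟩⟩
  rw [ouNorm, hs, csInf_Ioi]

lemma aux_e_ne (h : IsOrderUnitSpace C e) {u : V} (hu : Peripheral C e u) : e ≠ 0 := by
  intro h0
  have hmu : -u ∈ C := by
    have := hu.2.1; rwa [h0, zero_sub] at this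
  have hu0 : u = 0 := h.proper u hu.1 hmu
  have := hu.2.2.1
  rw [hu0, aux_norm_zero h (aux_e_mem h hu)] at this
  norm_num at this

lemma aux_norm_le (h : IsOrderUnitSpace C e) (he : e ∈ C) {t : ℝ} {w : V}
    (ht : 0 < t) (hw : w ∈ C) (htw : t • e - w ∈ C) : ouNorm C e w ≤ t :=
  csInf_le ⟨0, fun a ha => ha.1.le⟩ ⟨ht, htw, h.add_mem _ (h.smul_mem t ht.le e he) _ hw⟩

lemma aux_cone (h : IsOrderUnitSpace C e) {u : V} (hu : Peripheral C e u) (a b : ℝ) :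
    a • e + b • u ∈ C ↔ 0 ≤ a ∧ 0 ≤ a + b := by
  have he : e ∈ C := aux_e_mem h hu
  have hene : e ≠ 0 := aux_e_ne h hu
  constructor
  · intro hv
    constructor
    · -- 0 ≤ a
      by_contra ha'
      push_neg at ha'
      -- first, 0 < b
      have hb : 0 < b := by
        by_contra hb'
        push_neg at hb'
        have h1 : (-b) • u ∈ C := h.smul_mem _ (by linarith) u hu.1
        have h2 : a • e ∈ C := by
          have := h.add_mem _ hv _ h1
          have heq : a • e + b • u + (-b) • u = a • e := by module
          rwa [heq] at this
        have h3 : -(a • e) ∈ C := by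
          have := h.smul_mem (-a) (by linarith) e he
          rwa [neg_smul] at this
        have := h.proper _ h2 h3
        rw [smul_eq_zero] at this
        rcases this with h' | h'
        · linarith
        · exact hene h'
      -- u - ε • e ∈ C with ε = -a/b > 0
      set ε : ℝ := -a / b with hε
      have hεpos : 0 < ε := div_pos (by linarith) hb
      have hkey : u - ε • e ∈ C := by
        have := h.smul_mem (1/b) (by positivity) _ hv
        have hb' : b ≠ 0 := ne_of_gt hb
        have heq : (1/b) • (a • e + b • u) = u - ε • e := by
          rw [hε]; match_scalars <;> field_simp
        rwa [heq] at this
      rcases lt_or_ge ε 1 with hε1 | hε1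
      · have h1 : (1 - ε) • e - (e - u) ∈ C := by
          have heq : (1 - ε) • e - (e - u) = u - ε • e := by module
          rwa [heq]
        have := aux_norm_le h he (by linarith) hu.2.1 h1
        rw [hu.2.2.2] at this
        linarith
      · -- ε ≥ 1
        have h1 : (ε - 1) • e ∈ C := by
          have := h.smul_mem (ε - 1) (by linarith) e he
          exact this
        have h2 : -((ε - 1) • e) ∈ C := by
          have := h.add_mem _ hu.2.1 _ hkey
          have heq : e - u + (u - ε • e) = -((ε - 1) • e) := by module
          rwa [heq] at this
        have h3 := h.proper _ h1 h2
        rw [smul_eq_zero] at h3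
        rcases h3 with h' | h'
        · -- ε = 1, so u - e ∈ C and e - u ∈ C
          have hε1' : ε = 1 := by linarith
          have h4 : -(e - u) ∈ C := by
            have heq : u - ε • e = -(e - u) := by rw [hε1']; module
            rwa [heq] at hkey
          have h5 := h.proper _ hu.2.1 h4
          have := hu.2.2.2
          rw [h5, aux_norm_zero h he] at this
          norm_num at this
        · exact hene h'
    · -- 0 ≤ a + b
      by_contra hab'
      push_neg at hab'
      rcases lt_or_ge 0 a with ha | ha
      · -- a > 0
        set ε : ℝ := -(a + b) / a with hε
        have hεpos : 0 < ε := div_pos (by linarith) ha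
        set t : ℝ := 1 / (1 + ε) with ht
        have htpos : 0 < t := by positivity
        have ht1 : t < 1 := by
          rw [ht, div_lt_one (by linarith)]; linarith
        have hkey : t • e - u ∈ C := by
          have := h.smul_mem (t / a) (by positivity) _ hv
          have heq : (t / a) • (a • e + b • u) = t • e - u := by
            have ha' : a ≠ 0 := ne_of_gt ha
            have hb' : b ≠ 0 := by intro h'; rw [h'] at hab'; linarith
            have h1ε : (1 : ℝ) + ε ≠ 0 := by positivity
            rw [hε] at h1ε
            rw [ht, hε]
            match_scalars <;> field_simp <;> ring_nf <;> simp [hb']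
          rwa [heq] at this
        have := aux_norm_le h he htpos hu.1 hkey
        rw [hu.2.2.1] at this
        linarith
      · -- a ≤ 0
        have h1 : (-a) • (e - u) ∈ C := h.smul_mem _ (by linarith) _ hu.2.1
        have h2 : (a + b) • u ∈ C := by
          have := h.add_mem _ hv _ h1
          have heq : a • e + b • u + (-a) • (e - u) = (a + b) • u := by module
          rwa [heq] at this
        have h3 : -((a + b) • u) ∈ C := by
          have := h.smul_mem (-(a+b)) (by linarith) u hu.1
          rwa [neg_smul] at this
        have h4 := h.proper _ h2 h3
        rw [smul_eq_zero] at h4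
        rcases h4 with h' | h'
        · linarith
        · have := hu.2.2.1
          rw [h', aux_norm_zero h he] at this
          norm_num at this
  · rintro ⟨ha, hab⟩
    have h1 : a • (e - u) ∈ C := h.smul_mem _ ha _ hu.2.1
    have h2 : (a + b) • u ∈ C := h.smul_mem _ hab u hu.1
    have := h.add_mem _ h1 _ h2
    have heq : a • (e - u) + (a + b) • u = a • e + b • u := by module
    rwa [heq] at this

end Aux

theorem span_head_peripheral_iso_linfty2
    {V : Type*} [AddCommGroup V] [Module ℝ V] {C : Set V} {e : V}
    (h : IsOrderUnitSpace C e) (hdim : 2 ≤ Module.rank ℝ V)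
    {u : V} (hu : Peripheral C e u) :
    (∀ a b a' b' : ℝ, a • e + b • u = a' • e + b' • u → a = a' ∧ b = b') ∧
    (∀ a b : ℝ, a • e + b • u ∈ C ↔ 0 ≤ a ∧ 0 ≤ a + b) ∧
    (∀ a b : ℝ, ouNorm C e (a • e + b • u) = max |a| |a + b|) := by
  have he : e ∈ C := aux_e_mem h hu
  have hcone : ∀ a b : ℝ, a • e + b • u ∈ C ↔ 0 ≤ a ∧ 0 ≤ a + b := fun a b => aux_cone h hu a b
  refine ⟨?_, hcone, ?_⟩
  · intro a b a' b' heq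
    have h1 : (a - a') • e + (b - b') • u = 0 := by
      have hd : (a - a') • e + (b - b') • u = (a • e + b • u) - (a' • e + b' • u) := by module
      rw [hd, heq, sub_self]
    have h2 : (a - a') • e + (b - b') • u ∈ C := by rw [h1]; exact h.zero_mem
    have h3 : (a' - a) • e + (b' - b) • u ∈ C := by
      have hn : (a' - a) • e + (b' - b) • u = -((a - a') • e + (b - b') • u) := by module
      rw [hn, h1, neg_zero]; exact h.zero_mem
    rw [hcone] at h2 h3
    constructor <;> linarith [h2.1, h2.2, h3.1, h3.2]
  · intro a b
    set M := max |a| |a + b| with hM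
    have hMa : |a| ≤ M := le_max_left _ _
    have hMab : |a + b| ≤ M := le_max_right _ _
    rcases eq_or_lt_of_le (le_trans (abs_nonneg a) hMa) with hM0 | hMpos
    · have ha0 : a = 0 := by
        have h' := hMa; rw [← hM0] at h'
        exact abs_eq_zero.1 (le_antisymm h' (abs_nonneg a))
      have hab0 : a + b = 0 := by
        have h' := hMab; rw [← hM0] at h'
        exact abs_eq_zero.1 (le_antisymm h' (abs_nonneg _))
      have hb0 : b = 0 := by linarith
      rw [ha0, hb0, ← hM0]
      simpa using aux_norm_zero h he
    · refine le_antisymm ?_ ?_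
      · apply csInf_le ⟨0, fun c hc => hc.1.le⟩
        refine ⟨hMpos, ?_, ?_⟩
        · have heq : M • e - (a • e + b • u) = (M - a) • e + (-b) • u := by module
          rw [heq, hcone]
          exact ⟨by linarith [(abs_le.1 hMa).2], by linarith [(abs_le.1 hMab).2]⟩
        · have heq : M • e + (a • e + b • u) = (M + a) • e + b • u := by module
          rw [heq, hcone]
          exact ⟨by linarith [(abs_le.1 hMa).1], by linarith [(abs_le.1 hMab).1]⟩
      · apply le_csInf
        · obtain ⟨c, hc, h1, h2⟩ := h.unit (a • e + b • u)
          exact ⟨c, hc, h1, h2⟩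
        · rintro c ⟨hc, h1, h2⟩
          have e1 : c • e - (a • e + b • u) = (c - a) • e + (-b) • u := by module
          have e2 : c • e + (a • e + b • u) = (c + a) • e + b • u := by module
          rw [e1, hcone] at h1
          rw [e2, hcone] at h2
          apply max_le <;> rw [abs_le] <;>
            exact ⟨by linarith [h1.1, h1.2, h2.1, h2.2], by linarith [h1.1, h1.2, h2.1, h2.2]⟩
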